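/- The polynomial f(x) = x·((x^2 - x + 2)/(x^2 + x + 2))^2 defines a permutation of F_{5^k} for every odd positive integer k. (Here x^2 + x + 2 has no root in F_{5^k} when k is odd, so f is well-defined; it is the reduction of a polynomial map.) -/

import Mathlib

theorem conjecture_one (k : ℕ) (hk : Odd k)
    (F : Type*) [Field F] [Fintype F] (hF : Fintype.card F = 5 ^ k) :
    Function.Bijective (fun x : F => x * ((x ^ 2 - x + 2) / (x ^ 2 + x + 2)) ^ 2) := by
  obtain ⟨j, hj⟩ := hk
  -- characteristic facts
  have hkpos : k ≠ 0 := by omega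
  have h5 : (5 : F) = 0 := by
    have := FiniteField.cast_card_eq_zero F
    rw [hF] at this
    push_cast at this
    exact pow_eq_zero_iff hkpos |>.mp this
  have h2ne : (2 : F) ≠ 0 := by
    intro h
    have : (1 : F) = 0 := by linear_combination h5 - 2 * h
    exact one_ne_zero this
  -- 5^k mod 8 = 5 and mod 3 = 2
  have hpw : 5 ^ k = 25 ^ j * 5 := by
    subst hj; rw [pow_succ, pow_mul]; norm_num
  have hm8 : 5 ^ k % 8 = 5 := by
    have h25 : 25 ^ j % 8 = 1 := by
      rw [Nat.pow_mod]; norm_num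
    rw [hpw]; omega
  have hm3 : 5 ^ k % 3 = 2 := by
    have h25 : 25 ^ j % 3 = 1 := by
      rw [Nat.pow_mod]; norm_num
    rw [hpw]; omega
  obtain ⟨m, hm⟩ : ∃ m, 5 ^ k = 8 * m + 5 := ⟨5 ^ k / 8, by omega⟩
  obtain ⟨t, ht⟩ : ∃ t, 5 ^ k = 3 * t + 2 := ⟨5 ^ k / 3, by omega⟩
  -- 2 and 3 are nonsquares
  have key : ∀ c : F, (c ^ 4 = 1 ∧ c ^ 2 = 4) → ∀ w : F, w ^ 2 = c → False := by
    rintro c ⟨hc4, hc2⟩ w hw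
    have hwne : w ≠ 0 := by
      intro h0
      rw [h0] at hw
      have h1 : (1 : F) = 0 := by linear_combination h5 + hc2 + c * hw
      exact one_ne_zero h1
    have hp := FiniteField.pow_card_sub_one_eq_one w hwne
    rw [hF] at hp
    have he : 5 ^ k - 1 = 2 * (4 * m + 2) := by omega
    rw [he, pow_mul, hw, pow_add, pow_mul, hc4, one_pow, one_mul, hc2] at hp
    -- hp : (4 : F) = 1
    have : (2 : F) = 0 := by linear_combination h5 - hp
    exact h2ne this
  have key2 : ∀ w : F, w ^ 2 = 2 → False := by
    apply key
    constructor
    · -- 2^4 = 16 = 1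
      have : (2 : F) ^ 4 = 16 := by norm_num
      rw [this]; linear_combination 3 * h5
    · have : (2 : F) ^ 2 = 4 := by norm_num
      rw [this]
  have key3 : ∀ w : F, w ^ 2 = 3 → False := by
    apply key
    constructor
    · have : (3 : F) ^ 4 = 81 := by norm_num
      rw [this]; linear_combination 16 * h5
    · have : (3 : F) ^ 2 = 9 := by norm_num
      rw [this]; linear_combination h5
  -- denominators never vanish
  have hden : ∀ x : F, x ^ 2 + x + 2 ≠ 0 := by
    intro x h
    exact key3 (2 * x + 1) (by linear_combination 4 * h - 2 * h5)
  -- injectivity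
  have hinj : Function.Injective (fun x : F => x * ((x ^ 2 - x + 2) / (x ^ 2 + x + 2)) ^ 2) := by
    intro x y h
    simp only at h
    have dx := hden x
    have dy := hden y
    rw [div_pow, div_pow, mul_div_assoc', mul_div_assoc', div_eq_div_iff (pow_ne_zero 2 dx) (pow_ne_zero 2 dy)] at h
    by_contra hne
    have hsub : x - y ≠ 0 := sub_ne_zero.mpr hne
    set a : F := (x ^ 2 + 3) * y ^ 2 + 3 * x * y + 3 * x ^ 2 + 4 with ha
    set b : F := (3 * x + 4) * y ^ 2 + (3 * x ^ 2 + x + 4) * y + 4 * x ^ 2 + 4 * x with hb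
    have hq : (x - y) * (a ^ 2 - a * b + 2 * b ^ 2) = 0 := by
      rw [ha, hb]
      linear_combination h + (-4*y^3 - 12*y^4 - 5*y^5 - 16*x*y^2 + 4*x*y^3 - 10*x*y^4 - 7*x*y^5 + 16*x^2*y - 14*x^2*y^3 - 1*x^2*y^4 - 3*x^2*y^5 + 4*x^3 - 4*x^3*y + 14*x^3*y^2 - 6*x^3*y^4 + 1*x^3*y^5 + 12*x^4 + 10*x^4*y + 1*x^4*y^2 + 6*x^4*y^3 + 5*x^5 + 7*x^5*y + 3*x^5*y^2 - 1*x^5*y^3) * h5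
    have hQ0 : a ^ 2 - a * b + 2 * b ^ 2 = 0 := by
      rcases mul_eq_zero.mp hq with h' | h'
      · exact absurd h' hsub
      · exact h'
    have hbz : b = 0 := by
      by_contra hbne
      apply key3 ((2 * a - b) * b⁻¹)
      have h3 : (2 * a - b) ^ 2 = 3 * b ^ 2 := by
        linear_combination 4 * hQ0 - 2 * b ^ 2 * h5
      rw [mul_pow, h3]
      field_simp
    have haz : a = 0 := by
      have h2' : a ^ 2 = 0 := by rw [hbz] at hQ0; linear_combination hQ0
      exact pow_eq_zero_iff (by norm_num : (2:ℕ) ≠ 0) |>.mp h2'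
    -- resultant identity
    have hA0 : (x ^ 2 + 3) * y ^ 2 + 3 * x * y + 3 * x ^ 2 + 4 = 0 := by rw [← ha]; exact haz
    have hB0 : (3 * x + 4) * y ^ 2 + (3 * x ^ 2 + x + 4) * y + 4 * x ^ 2 + 4 * x = 0 := by
      rw [← hb]; exact hbz
    have hres : (3 : F) * ((x ^ 2 + x + 2) * ((x ^ 2 + x + 1) * ((x ^ 2 + 3 * x + 4) * (x ^ 2 + 4 * x + 2)))) = 0 := by
      linear_combination (2 + 3*y + 4*x + 3*x^2 + 4*x^2*y + 1*x^3 + 1*x^3*y + 4*x^4 + 4*x^5 + 4*x^5*y + 4*x^6) * hA0 + (2 + 4*y + 4*x + 2*x*y + 1*x^2 + 1*x^2*y + 3*x^3 + 1*x^3*y + 4*x^4 + 2*x^4*y + 1*x^5 + 4*x^5*y + 4*x^6 + 2*x^6*y) * hB0 + (8 - 4*y - 6*y^2 - 5*y^3 + 36*x - 8*x*y - 11*x*y^2 - 4*x*y^3 + 72*x^2 - 15*x^2*y - 9*x^2*y^2 - 5*x^2*y^3 + 96*x^3 - 10*x^3*y - 9*x^3*y^2 - 2*x^3*y^3 + 80*x^4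 - 9*x^4*y - 11*x^4*y^2 - 3*x^4*y^3 + 44*x^5 - 12*x^5*y - 10*x^5*y^2 - 7*x^5*y^3 + 12*x^6 - 13*x^6*y - 13*x^6*y^2 - 4*x^6*y^3 - 1*x^7 - 11*x^7*y - 6*x^7*y^2 - 2*x^7*y^3 - 5*x^8 - 4*x^8*y - 2*x^8*y^2) * h5
    have h3ne : (3 : F) ≠ 0 := by
      intro h
      have : (2 : F) = 0 := by linear_combination h5 - h
      exact h2ne this
    rcases mul_eq_zero.mp hres with h' | h'
    · exact h3ne h'
    rcases mul_eq_zero.mp h' with h' | h'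
    · exact dx h'
    rcases mul_eq_zero.mp h' with h' | h'
    · -- x^2 + x + 1 = 0
      have hx0 : x ≠ 0 := by
        intro h0
        rw [h0] at h'
        have : (1 : F) = 0 := by linear_combination h'
        exact one_ne_zero this
      have hx3 : x ^ 3 = 1 := by linear_combination (x - 1) * h'
      have hp := FiniteField.pow_card_sub_one_eq_one x hx0
      rw [hF] at hp
      have he : 5 ^ k - 1 = 3 * t + 1 := by omega
      rw [he, pow_add, pow_mul, hx3, one_pow, pow_one, one_mul] at hp
      rw [hp] at h'
      have h3z : (3 : F) = 0 := by linear_combination h'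
      exact h3ne h3z
    rcases mul_eq_zero.mp h' with h' | h'
    · exact key3 (2 * x + 3) (by linear_combination 4 * h' - 2 * h5)
    · exact key3 (2 * x + 4) (by linear_combination 4 * h' + h5)
  exact Finite.injective_iff_bijective.mp hinj
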